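/- Let V be a finite-dimensional real normed vector space, K ⊆ V a compact set, and Γ ⊆ V a closed convex proper cone. Then there exist x ∈ V and a closed convex proper cone Γ' ⊆ V such that K + Γ ⊆ x + Γ'. -/

import Mathlib

open Pointwise

/-- A cone in a real vector space: contains `0` and is closed under
multiplication by nonnegative real scalars. -/
def IsCone {V : Type*} [AddCommGroup V] [Module ℝ V] (Γ : Set V) : Prop :=
  (0 : V) ∈ Γ ∧ ∀ r : ℝ, 0 ≤ r → ∀ v ∈ Γ, r • v ∈ Γ

/-- A proper cone: a cone containing no line through the origin. -/
def IsProperCone {V : Type*} [AddCommGroup V] [Module ℝ V] (Γ : Set V) : Prop :=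
  IsCone Γ ∧ ∀ v ∈ Γ, -v ∈ Γ → v = 0

/-- Summing a function vanishing off the range of an injection. -/
lemma sum_eq_sum_comp_of_injective {α β M : Type*} [Fintype α] [Fintype β] [AddCommMonoid M]
    (u : α → β) (hu : Function.Injective u) (F : β → M)
    (h0 : ∀ j, j ∉ Set.range u → F j = 0) :
    ∑ j, F j = ∑ i, F (u i) := by
  classical
  have h1 : ∑ i, F (u i) = ∑ j ∈ Finset.univ.image u, F j :=
    (Finset.sum_image (fun a _ b _ h => hu h)).symm
  rw [h1]
  refine (Finset.sum_subset (Finset.subset_univ _) fun j _ hj => ?_).symm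
  exact h0 j (by simpa [Finset.mem_image, Set.mem_range, eq_comm] using hj)

/-- A closed convex proper cone in a finite-dimensional normed space admits a continuous
linear functional which is uniformly positive on it. -/
lemma exists_uniform_positive_functional {V : Type*} [NormedAddCommGroup V] [NormedSpace ℝ V]
    [FiniteDimensional ℝ V] (Γ : Set V) (hΓclosed : IsClosed Γ) (hΓconv : Convex ℝ Γ)
    (hΓproper : IsProperCone Γ) :
    ∃ (f : V →L[ℝ] ℝ) (ε : ℝ), 0 < ε ∧ ∀ v ∈ Γ, ε * ‖v‖ ≤ f v := by
  classical
  obtain ⟨⟨h0Γ, hsmul⟩, hprop⟩ := hΓproper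
  -- Γ is closed under addition
  have hadd : ∀ x ∈ Γ, ∀ y ∈ Γ, x + y ∈ Γ := by
    intro x hx y hy
    have hmid : (1/2 : ℝ) • x + (1/2 : ℝ) • y ∈ Γ :=
      hΓconv hx hy (by norm_num) (by norm_num) (by norm_num)
    have := hsmul 2 (by norm_num) _ hmid
    have h2 : (2 : ℝ) • ((1/2 : ℝ) • x + (1/2 : ℝ) • y) = x + y := by
      rw [smul_add, smul_smul, smul_smul]; norm_num
    rwa [h2] at this
  set S : Set V := Γ ∩ Metric.sphere (0 : V) 1 with hS
  set n : ℕ := Module.finrank ℝ V + 1 with hn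
  set g : (Fin n → ℝ) × (Fin n → V) → V := fun p => ∑ i, p.1 i • p.2 i with hg
  have hgcont : Continuous g := by
    apply continuous_finset_sum
    intro i _
    exact ((continuous_apply i).comp continuous_fst).smul
      ((continuous_apply i).comp continuous_snd)
  set D : Set ((Fin n → ℝ) × (Fin n → V)) :=
    stdSimplex ℝ (Fin n) ×ˢ Set.pi Set.univ (fun _ : Fin n => S) with hD
  have hScompact : IsCompact S := (isCompact_sphere (0 : V) 1).inter_left hΓclosed
  have hDcompact : IsCompact D :=
    (isCompact_stdSimplex (𝕜 := ℝ) (ι := Fin n)).prod (isCompact_univ_pi fun _ => hScompact)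
  have himg : IsCompact (g '' D) := hDcompact.image hgcont
  -- 0 is not in the image
  have h0img : (0 : V) ∉ g '' D := by
    rintro ⟨⟨w, z⟩, ⟨hw, hz⟩, heq⟩
    have hsum1 : ∑ i, w i = 1 := hw.2
    have : ∃ i : Fin n, w i ≠ 0 := by
      by_contra h
      push_neg at h
      simp [h] at hsum1
    obtain ⟨i, hi⟩ := this
    have hwi : 0 < w i := lt_of_le_of_ne (hw.1 i) (Ne.symm hi)
    have hzi : z i ∈ S := hz i (Set.mem_univ i)
    have ha : w i • z i ∈ Γ := hsmul _ (le_of_lt hwi) _ hzi.1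
    have hb : ∑ j ∈ Finset.univ.erase i, w j • z j ∈ Γ := by
      refine Finset.sum_induction _ (· ∈ Γ) (fun a b hA hB => hadd a hA b hB) h0Γ ?_
      intro j hj
      exact hsmul _ (hw.1 j) _ ((hz j (Set.mem_univ j)).1)
    have hab : w i • z i + ∑ j ∈ Finset.univ.erase i, w j • z j = 0 := by
      have hins : (Finset.univ : Finset (Fin n)) = insert i (Finset.univ.erase i) :=
        (Finset.insert_erase (Finset.mem_univ i)).symm
      have heq' : ∑ j, w j • z j = 0 := heq
      rw [hins, Finset.sum_insert (Finset.notMem_erase i _)] at heq'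
      exact heq'
    have hneg : -(w i • z i) ∈ Γ := by
      rw [neg_eq_of_add_eq_zero_left (by rw [add_comm] at hab; exact hab)] at *
      exact hb
    have := hprop _ ha hneg
    have hzi0 : z i = 0 := by
      have := smul_eq_zero.mp this
      rcases this with h | h
      · exact absurd h hi
      · exact h
    have : ‖z i‖ = 1 := by simpa using hzi.2
    rw [hzi0] at this
    simp at this
  -- convexHull S is contained in the image
  have hsub : convexHull ℝ S ⊆ g '' D := by
    intro x hx
    obtain ⟨ι, hι, z, w, hrange, hindep, hpos, hsum1, hsum⟩ :=
      eq_pos_convex_span_of_mem_convexHull hx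
    have hne : Nonempty ι := by
      by_contra h
      rw [not_nonempty_iff] at h
      simp [Finset.univ_eq_empty] at hsum1
    obtain ⟨i₀⟩ := hne
    have hs₀ : z i₀ ∈ S := hrange (Set.mem_range_self i₀)
    have hcard : Fintype.card ι ≤ n := by
      calc Fintype.card ι ≤ Module.finrank ℝ (vectorSpan ℝ (Set.range z)) + 1 :=
            hindep.card_le_finrank_succ
        _ ≤ n := by
            have := Submodule.finrank_le (vectorSpan ℝ (Set.range z))
            omega
    set e : ι ≃ Fin (Fintype.card ι) := Fintype.equivFin ι with he
    set u : ι → Fin n := fun i => Fin.castLE hcard (e i) with hu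
    have huinj : Function.Injective u := by
      intro a b hab
      apply e.injective
      exact Fin.castLE_injective hcard hab
    set W : Fin n → ℝ := Function.extend u w (fun _ => 0) with hW
    set Z : Fin n → V := Function.extend u z (fun _ => z i₀) with hZ
    have hWu : ∀ i, W (u i) = w i := fun i => huinj.extend_apply w _ i
    have hZu : ∀ i, Z (u i) = z i := fun i => huinj.extend_apply z _ i
    have hWoff : ∀ j, j ∉ Set.range u → W j = 0 := fun j hj =>
      Function.extend_apply' w _ j (by simpa [Set.mem_range] using hj)
    have hZoff : ∀ j, j ∉ Set.range u → Z j = z i₀ := fun j hj =>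
      Function.extend_apply' z _ j (by simpa [Set.mem_range] using hj)
    refine ⟨(W, Z), ⟨?_, ?_⟩, ?_⟩
    · constructor
      · intro j
        show 0 ≤ W j
        by_cases hj : j ∈ Set.range u
        · obtain ⟨i, rfl⟩ := hj
          rw [hWu]
          exact le_of_lt (hpos i)
        · rw [hWoff j hj]
      · show ∑ j, W j = 1
        have := sum_eq_sum_comp_of_injective u huinj W hWoff
        rw [this]
        simp only [hWu]
        exact hsum1
    · intro j _
      show Z j ∈ S
      by_cases hj : j ∈ Set.range u
      · obtain ⟨i, rfl⟩ := hj
        rw [hZu]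
        exact hrange (Set.mem_range_self i)
      · rw [hZoff j hj]
        exact hs₀
    · show ∑ j, W j • Z j = x
      have hoff : ∀ j, j ∉ Set.range u → W j • Z j = 0 := by
        intro j hj
        rw [hWoff j hj, zero_smul]
      rw [sum_eq_sum_comp_of_injective u huinj _ hoff]
      simp only [hWu, hZu]
      exact hsum
  -- separate 0 from the closure of the convex hull
  have hclsub : closure (convexHull ℝ S) ⊆ g '' D :=
    closure_minimal hsub himg.isClosed
  have h0cl : (0 : V) ∉ closure (convexHull ℝ S) := fun h => h0img (hclsub h)
  obtain ⟨f, ε, hf0, hb⟩ :=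
    geometric_hahn_banach_point_closed ((convex_convexHull ℝ S).closure) isClosed_closure h0cl
  rw [map_zero] at hf0
  refine ⟨f, ε, hf0, ?_⟩
  intro v hv
  rcases eq_or_ne v 0 with rfl | hvne
  · simp
  · have hvnorm : 0 < ‖v‖ := norm_pos_iff.mpr hvne
    have hmem : ‖v‖⁻¹ • v ∈ S := by
      constructor
      · exact hsmul _ (inv_nonneg.mpr (le_of_lt hvnorm)) _ hv
      · simp [norm_smul, abs_of_nonneg (inv_nonneg.mpr (le_of_lt hvnorm)),
          inv_mul_cancel₀ (ne_of_gt hvnorm)]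
    have hmemcl : ‖v‖⁻¹ • v ∈ closure (convexHull ℝ S) :=
      subset_closure (subset_convexHull ℝ S hmem)
    have := hb _ hmemcl
    rw [map_smul, smul_eq_mul] at this
    have h2 : ε * ‖v‖ < ‖v‖ * (‖v‖⁻¹ * f v) := by
      rw [mul_comm ε ‖v‖]
      exact mul_lt_mul_of_pos_left this hvnorm
    rw [← mul_assoc, mul_inv_cancel₀ (ne_of_gt hvnorm), one_mul] at h2
    exact le_of_lt h2

/-- The sum of a compact set and a closed convex proper cone is contained in a translate
of a closed convex proper cone. -/
theorem compact_add_proper_cone_subset_translate_proper_cone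
    {V : Type*} [NormedAddCommGroup V] [NormedSpace ℝ V] [FiniteDimensional ℝ V]
    (K : Set V) (hK : IsCompact K)
    (Γ : Set V) (hΓclosed : IsClosed Γ) (hΓconv : Convex ℝ Γ)
    (hΓproper : IsProperCone Γ) :
    ∃ (x : V) (Γ' : Set V), IsClosed Γ' ∧ Convex ℝ Γ' ∧ IsProperCone Γ' ∧
      K + Γ ⊆ x +ᵥ Γ' := by
  classical
  rcases subsingleton_or_nontrivial V with hV | hV
  · -- trivial space
    refine ⟨0, {0}, isClosed_singleton, convex_singleton 0,
      ⟨⟨rfl, fun r _ v hv => by simp [Set.mem_singleton_iff.mp hv]⟩,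
        fun v hv _ => Set.mem_singleton_iff.mp hv⟩, ?_⟩
    intro a _
    refine ⟨0, rfl, by simp [Subsingleton.elim a (0:V)]⟩
  -- get a functional uniformly positive on Γ, positive on some nonzero vector w
  obtain ⟨f, ε, hε, hfΓ, w, hw0, hfw⟩ :
      ∃ (f : V →L[ℝ] ℝ) (ε : ℝ), 0 < ε ∧ (∀ v ∈ Γ, ε * ‖v‖ ≤ f v) ∧
        ∃ w : V, w ≠ 0 ∧ ε * ‖w‖ ≤ f w := by
    by_cases hΓtriv : ∀ v ∈ Γ, v = (0 : V)
    · obtain ⟨w, hw⟩ := exists_ne (0 : V)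
      obtain ⟨g, hg1, hgw⟩ := exists_dual_vector ℝ w (norm_ne_zero_iff.mpr hw)
      refine ⟨g, 1/2, by norm_num, ?_, w, hw, ?_⟩
      · intro v hv
        rw [hΓtriv v hv]
        simp
      · have hgw' : g w = ‖w‖ := by exact_mod_cast hgw
        rw [hgw']
        have : 0 ≤ ‖w‖ := norm_nonneg w
        nlinarith
    · push_neg at hΓtriv
      obtain ⟨v₀, hv₀Γ, hv₀⟩ := hΓtriv
      obtain ⟨f, ε, hε, hfΓ⟩ :=
        exists_uniform_positive_functional Γ hΓclosed hΓconv hΓproper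
      exact ⟨f, ε, hε, hfΓ, v₀, hv₀, hfΓ v₀ hv₀Γ⟩
  have hwnorm : 0 < ‖w‖ := norm_pos_iff.mpr hw0
  -- bound K
  obtain ⟨R₀, hR₀⟩ := hK.isBounded.subset_closedBall 0
  set R : ℝ := max R₀ 0 with hR
  have hRnonneg : 0 ≤ R := le_max_right _ _
  have hKR : ∀ k ∈ K, ‖k‖ ≤ R := by
    intro k hk
    have := hR₀ hk
    rw [Metric.mem_closedBall, dist_zero_right] at this
    exact this.trans (le_max_left _ _)
  set s : ℝ := ((ε / 2 + ‖f‖) * R) / ((ε / 2) * ‖w‖) with hs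
  have hdenom : 0 < (ε / 2) * ‖w‖ := by positivity
  have hsnonneg : 0 ≤ s := by
    apply div_nonneg _ (le_of_lt hdenom)
    have : (0:ℝ) ≤ ‖f‖ := norm_nonneg f
    nlinarith
  have hskey : s * ((ε / 2) * ‖w‖) = (ε / 2 + ‖f‖) * R :=
    div_mul_cancel₀ _ (ne_of_gt hdenom)
  set Γ' : Set V := {v | (ε / 2) * ‖v‖ ≤ f v} with hΓ'
  refine ⟨-(s • w), Γ', ?_, ?_, ⟨⟨?_, ?_⟩, ?_⟩, ?_⟩
  · -- closed
    have : Γ' = {v | (ε / 2) * ‖v‖ - f v ≤ 0} := by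
      ext v; simp [hΓ', sub_nonpos]
    rw [this]
    exact isClosed_le (by continuity) continuous_const
  · -- convex
    intro a ha b hb ta tb hta htb htab
    simp only [hΓ', Set.mem_setOf_eq] at ha hb ⊢
    have hnorm : ‖ta • a + tb • b‖ ≤ ta * ‖a‖ + tb * ‖b‖ := by
      calc ‖ta • a + tb • b‖ ≤ ‖ta • a‖ + ‖tb • b‖ := norm_add_le _ _
        _ = ta * ‖a‖ + tb * ‖b‖ := by
            rw [norm_smul, norm_smul, Real.norm_of_nonneg hta, Real.norm_of_nonneg htb]
    have hf' : f (ta • a + tb • b) = ta * f a + tb * f b := by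
      rw [map_add, map_smul, map_smul]; rfl
    rw [hf']
    nlinarith [mul_le_mul_of_nonneg_left ha hta, mul_le_mul_of_nonneg_left hb htb]
  · -- 0 ∈ Γ'
    simp [hΓ']
  · -- smul closed
    intro r hr v hv
    simp only [hΓ', Set.mem_setOf_eq] at hv ⊢
    rw [norm_smul, Real.norm_of_nonneg hr, map_smul, smul_eq_mul]
    calc ε / 2 * (r * ‖v‖) = r * (ε / 2 * ‖v‖) := by ring
      _ ≤ r * f v := mul_le_mul_of_nonneg_left hv hr
  · -- proper
    intro v hv hnv
    simp only [hΓ', Set.mem_setOf_eq, norm_neg, map_neg] at hv hnv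
    have : ‖v‖ ≤ 0 := by nlinarith
    exact norm_le_zero_iff.mp this
  · -- inclusion
    rintro a ⟨k, hk, v, hv, rfl⟩
    rw [Set.mem_vadd_set_iff_neg_vadd_mem]
    simp only [hΓ', Set.mem_setOf_eq, neg_neg, vadd_eq_add]
    have hfk : -(‖f‖ * ‖k‖) ≤ f k := by
      have h1 : |f k| ≤ ‖f‖ * ‖k‖ := by
        have := f.le_opNorm k
        calc |f k| = ‖f k‖ := (Real.norm_eq_abs _).symm
          _ ≤ ‖f‖ * ‖k‖ := this
      linarith [neg_abs_le (f k)]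
    have hfv : ε * ‖v‖ ≤ f v := hfΓ v hv
    have hfsw : s * (ε * ‖w‖) ≤ s * f w := mul_le_mul_of_nonneg_left hfw hsnonneg
    have hknorm : ‖k‖ ≤ R := hKR k hk
    have hnormbound : ‖s • w + (k + v)‖ ≤ s * ‖w‖ + ‖k‖ + ‖v‖ := by
      calc ‖s • w + (k + v)‖ ≤ ‖s • w‖ + ‖k + v‖ := norm_add_le _ _
        _ ≤ ‖s • w‖ + (‖k‖ + ‖v‖) := by linarith [norm_add_le k v]
        _ = s * ‖w‖ + ‖k‖ + ‖v‖ := by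
            rw [norm_smul, Real.norm_of_nonneg hsnonneg]; ring
    have hfval : f (s • w + (k + v)) = s * f w + f k + f v := by
      rw [map_add, map_add, map_smul, smul_eq_mul]; ring
    rw [hfval]
    have hknonneg : 0 ≤ ‖k‖ := norm_nonneg k
    have hvnonneg : 0 ≤ ‖v‖ := norm_nonneg v
    have hfnonneg : 0 ≤ ‖f‖ := norm_nonneg f
    nlinarith [mul_le_mul_of_nonneg_left hnormbound (le_of_lt (half_pos hε)),
      mul_le_mul_of_nonneg_left hknorm hfnonneg,
      mul_le_mul_of_nonneg_left hknorm (le_of_lt (half_pos hε))]
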